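/- For every monomial x^α with α ∈ B(n,d), there exist real coefficients c_γ such that x^α = Σ_{γ ∈ B(n,d)} c_γ ⟨γ, x⟩^d; moreover the coefficients can be chosen so that c_γ = 0 whenever γ has a nonzero entry in a coordinate where α is zero (i.e., the support of γ is contained in the support of α). -/

import Mathlib

open Finset Fintype

/-- The `m`-th finite difference of `k ↦ k^r` at 0. -/
noncomputable def Adiff (m r : ℕ) : ℝ :=
  ∑ k ∈ range (m + 1), (-1 : ℝ) ^ (m - k) * (m.choose k : ℝ) * (k : ℝ) ^ r

lemma Adiff_alt (m : ℕ) (hm : 0 < m) : Adiff m 0 = 0 := by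
  have h := add_pow (1 : ℝ) (-1) m
  simp only [one_pow, one_mul] at h
  unfold Adiff
  simp only [pow_zero, mul_one]
  rw [← h, show (1 : ℝ) + -1 = 0 by ring, zero_pow hm.ne']

lemma Adiff_succ (m r : ℕ) :
    Adiff (m + 1) (r + 1) = (m + 1 : ℝ) * ∑ s ∈ range (r + 1), (r.choose s : ℝ) * Adiff m s := by
  unfold Adiff
  rw [Finset.sum_range_succ']
  simp only [Nat.cast_zero, zero_pow (Nat.succ_ne_zero r), mul_zero, add_zero]
  have key : ∀ j, ((m + 1).choose (j + 1) : ℝ) * ((j : ℝ) + 1) = (m + 1 : ℝ) * (m.choose j : ℝ) := by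
    intro j
    have h0 := Nat.add_one_mul_choose_eq m j
    have h2 := congrArg (fun t : ℕ => (t : ℝ)) h0
    try simp only [Nat.succ_eq_add_one] at h2
    push_cast at h2
    linarith [h2]
  have expand : ∀ j : ℕ, ((j : ℝ) + 1) ^ r = ∑ s ∈ range (r + 1), (r.choose s : ℝ) * (j : ℝ) ^ s := by
    intro j
    have := add_pow (j : ℝ) 1 r
    simp only [one_pow, mul_one] at this
    rw [this]
    exact Finset.sum_congr rfl fun s _ => by ring
  push_cast
  calc ∑ j ∈ range (m + 1), (-1:ℝ) ^ (m - j) * ((m+1).choose (j+1) : ℝ) * ((j:ℝ)+1) ^ (r+1)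
      = ∑ j ∈ range (m + 1), (-1:ℝ) ^ (m - j) * ((m+1).choose (j+1) : ℝ) * (((j:ℝ)+1) * ((j:ℝ)+1) ^ r) := by
        apply Finset.sum_congr rfl; intro j hj
        rw [pow_succ]
        ring
    _ = ∑ j ∈ range (m + 1), (-1:ℝ) ^ (m - j) * ((m + 1 : ℝ) * (m.choose j : ℝ)) * ((j:ℝ)+1) ^ r := by
        apply Finset.sum_congr rfl; intro j hj
        rw [← key j]; ring
    _ = ∑ j ∈ range (m + 1), ∑ s ∈ range (r + 1),
          (m + 1 : ℝ) * ((r.choose s : ℝ) * ((-1:ℝ) ^ (m - j) * (m.choose j : ℝ) * (j:ℝ) ^ s)) := by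
        apply Finset.sum_congr rfl; intro j hj
        rw [expand j, Finset.mul_sum]
        exact Finset.sum_congr rfl fun s _ => by ring
    _ = (m + 1 : ℝ) * ∑ s ∈ range (r + 1), (r.choose s : ℝ) *
          ∑ j ∈ range (m + 1), (-1:ℝ) ^ (m - j) * (m.choose j : ℝ) * (j:ℝ) ^ s := by
        rw [Finset.sum_comm, Finset.mul_sum]
        apply Finset.sum_congr rfl
        intro s _
        rw [Finset.mul_sum]
        rw [Finset.mul_sum]

lemma Adiff_spec (m : ℕ) : (∀ r, r < m → Adiff m r = 0) ∧ Adiff m m = (Nat.factorial m : ℝ) := by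
  induction m with
  | zero =>
    refine ⟨fun r hr => absurd hr (Nat.not_lt_zero r), ?_⟩
    simp [Adiff]
  | succ m ih =>
    obtain ⟨ih1, ih2⟩ := ih
    constructor
    · intro r hr
      match r with
      | 0 => exact Adiff_alt (m+1) (Nat.succ_pos m)
      | Nat.succ s =>
        rw [Adiff_succ]
        have : ∀ t ∈ range (s + 1), (s.choose t : ℝ) * Adiff m t = 0 := by
          intro t ht
          rw [ih1 t (lt_of_lt_of_le (mem_range.mp ht) (by omega))]
          ring
        rw [Finset.sum_congr rfl this]
        simp
    · rw [Adiff_succ, Finset.sum_range_succ]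
      have : ∀ t ∈ range m, (m.choose t : ℝ) * Adiff m t = 0 := by
        intro t ht
        rw [ih1 t (mem_range.mp ht)]; ring
      rw [Finset.sum_congr rfl this]
      simp only [sum_const_zero, zero_add, Nat.choose_self, Nat.cast_one, one_mul, ih2]
      rw [Nat.factorial_succ]
      push_cast; ring

lemma Adiff_eq_zero_of_lt {m r : ℕ} (h : r < m) : Adiff m r = 0 := (Adiff_spec m).1 r h

lemma Adiff_self (m : ℕ) : Adiff m m = (Nat.factorial m : ℝ) := (Adiff_spec m).2

lemma Adiff_zero_pos {r : ℕ} (hr : 0 < r) : Adiff 0 r = 0 := by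
  simp [Adiff, zero_pow hr.ne']

lemma Adiff_ne_zero_ge {m r : ℕ} (h : Adiff m r ≠ 0) : m ≤ r := by
  by_contra hc
  exact h (Adiff_eq_zero_of_lt (by omega))

lemma EQkey (n d : ℕ) (j : Fin n) (μ : Fin n → ℕ) (hμj : μ j = 0) (hμd : ∑ i, μ i ≤ d)
    (x : Fin n → ℝ) :
    ∑ k ∈ piFinset (fun i => range (μ i + 1)),
      (∏ i, ((-1:ℝ) ^ (μ i - k i) * ((μ i).choose (k i) : ℝ))) *
        (∑ i, ((if i = j then d - ∑ i', k i' else k i : ℕ) : ℝ) * x i) ^ d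
    = ∑ p ∈ (range (d+1)).sigma (fun r => piAntidiag (univ : Finset (Fin n)) r),
        ((d.choose p.1 : ℝ) * (Nat.multinomial univ p.2 : ℝ) * (∏ i, Adiff (μ i) (p.2 i))
            * (d:ℝ) ^ (d - p.1)) * (x j ^ (d - p.1) * ∏ i, (x i - x j) ^ p.2 i) := by
  set z : Fin n → ℝ := fun i => x i - x j with hz
  calc
    ∑ k ∈ piFinset (fun i => range (μ i + 1)),
      (∏ i, ((-1:ℝ) ^ (μ i - k i) * ((μ i).choose (k i) : ℝ))) *
        (∑ i, ((if i = j then d - ∑ i', k i' else k i : ℕ) : ℝ) * x i) ^ d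
      = ∑ k ∈ piFinset (fun i => range (μ i + 1)),
          ∑ p ∈ (range (d+1)).sigma (fun r => piAntidiag (univ : Finset (Fin n)) r),
            (∏ i, ((-1:ℝ) ^ (μ i - k i) * ((μ i).choose (k i) : ℝ))) *
              (((Nat.multinomial univ p.2 : ℝ) * ∏ i, ((k i : ℝ) * z i) ^ p.2 i) *
                ((d:ℝ) * x j) ^ (d - p.1) * (d.choose p.1 : ℝ)) := by
      apply Finset.sum_congr rfl
      intro k hk
      have hkmem := mem_piFinset.mp hk
      have hkj : k j = 0 := by
        have := hkmem j
        rw [hμj] at this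
        simpa using this
      have hkle : (∑ i, k i) ≤ d := by
        refine le_trans (Finset.sum_le_sum fun i _ => ?_) hμd
        exact Nat.lt_succ_iff.mp (mem_range.mp (hkmem i))
      have hcast : ((d - ∑ i', k i' : ℕ) : ℝ) = (d:ℝ) - ∑ i', (k i' : ℝ) := by
        rw [Nat.cast_sub hkle, Nat.cast_sum]
      have hlin : (∑ i, ((if i = j then d - ∑ i', k i' else k i : ℕ) : ℝ) * x i)
          = (d:ℝ) * x j + ∑ i, (k i : ℝ) * z i := by
        have hterm : ∀ i, ((if i = j then d - ∑ i', k i' else k i : ℕ) : ℝ) * x i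
            = (k i : ℝ) * x i + (if i = j then ((d:ℝ) - ∑ i', (k i' : ℝ)) * x j else 0) := by
          intro i
          by_cases h : i = j
          · subst h
            rw [if_pos rfl, if_pos rfl, hcast, hkj]
            push_cast
            ring
          · rw [if_neg h, if_neg h, add_zero]
        rw [Finset.sum_congr rfl fun i _ => hterm i, Finset.sum_add_distrib,
          Finset.sum_ite_eq' univ j]
        simp only [mem_univ, if_true, hz]
        have : ∑ i, (k i : ℝ) * (x i - x j)
            = (∑ i, (k i : ℝ) * x i) - (∑ i', (k i' : ℝ)) * x j := by
          rw [Finset.sum_mul, ← Finset.sum_sub_distrib]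
          exact Finset.sum_congr rfl fun i _ => by ring
        rw [this]
        ring
      have inner : ∀ r ∈ range (d+1),
          (∏ i, ((-1:ℝ) ^ (μ i - k i) * ((μ i).choose (k i) : ℝ))) *
            ((∑ i, (k i : ℝ) * z i) ^ r * ((d:ℝ) * x j) ^ (d - r) * (d.choose r : ℝ))
          = ∑ ν ∈ piAntidiag (univ : Finset (Fin n)) r,
              (∏ i, ((-1:ℝ) ^ (μ i - k i) * ((μ i).choose (k i) : ℝ))) *
                (((Nat.multinomial univ ν : ℝ) * ∏ i, ((k i : ℝ) * z i) ^ ν i) *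
                  ((d:ℝ) * x j) ^ (d - r) * (d.choose r : ℝ)) := by
        intro r hr
        rw [sum_pow_eq_sum_piAntidiag univ (fun i => (k i : ℝ) * z i) r, Finset.sum_mul,
          Finset.sum_mul, Finset.mul_sum]
      rw [hlin, add_comm, add_pow, Finset.mul_sum, Finset.sum_congr rfl inner,
        Finset.sum_sigma']
    _ = ∑ p ∈ (range (d+1)).sigma (fun r => piAntidiag (univ : Finset (Fin n)) r),
          ∑ k ∈ piFinset (fun i => range (μ i + 1)),
            (∏ i, ((-1:ℝ) ^ (μ i - k i) * ((μ i).choose (k i) : ℝ))) *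
              (((Nat.multinomial univ p.2 : ℝ) * ∏ i, ((k i : ℝ) * z i) ^ p.2 i) *
                ((d:ℝ) * x j) ^ (d - p.1) * (d.choose p.1 : ℝ)) := Finset.sum_comm
    _ = ∑ p ∈ (range (d+1)).sigma (fun r => piAntidiag (univ : Finset (Fin n)) r),
        ((d.choose p.1 : ℝ) * (Nat.multinomial univ p.2 : ℝ) * (∏ i, Adiff (μ i) (p.2 i))
            * (d:ℝ) ^ (d - p.1)) * (x j ^ (d - p.1) * ∏ i, (x i - x j) ^ p.2 i) := by
      apply Finset.sum_congr rfl
      intro p hp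
      have step : ∀ k ∈ piFinset (fun i => range (μ i + 1)),
          (∏ i, ((-1:ℝ) ^ (μ i - k i) * ((μ i).choose (k i) : ℝ))) *
              (((Nat.multinomial univ p.2 : ℝ) * ∏ i, ((k i : ℝ) * z i) ^ p.2 i) *
                ((d:ℝ) * x j) ^ (d - p.1) * (d.choose p.1 : ℝ))
          = ((Nat.multinomial univ p.2 : ℝ) * ((d:ℝ) * x j) ^ (d - p.1) * (d.choose p.1 : ℝ)
              * ∏ i, z i ^ p.2 i) *
            (∏ i, ((-1:ℝ) ^ (μ i - k i) * ((μ i).choose (k i) : ℝ) * (k i : ℝ) ^ p.2 i)) := by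
        intro k hk
        have hsplit : (∏ i, ((-1:ℝ) ^ (μ i - k i) * ((μ i).choose (k i) : ℝ))) *
            ∏ i, ((k i : ℝ) * z i) ^ p.2 i
            = (∏ i, ((-1:ℝ) ^ (μ i - k i) * ((μ i).choose (k i) : ℝ) * (k i : ℝ) ^ p.2 i)) *
              ∏ i, z i ^ p.2 i := by
          rw [← prod_mul_distrib, ← prod_mul_distrib]
          apply Finset.prod_congr rfl
          intro i _
          rw [mul_pow]
          ring
        calc (∏ i, ((-1:ℝ) ^ (μ i - k i) * ((μ i).choose (k i) : ℝ))) *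
              (((Nat.multinomial univ p.2 : ℝ) * ∏ i, ((k i : ℝ) * z i) ^ p.2 i) *
                ((d:ℝ) * x j) ^ (d - p.1) * (d.choose p.1 : ℝ))
            = ((∏ i, ((-1:ℝ) ^ (μ i - k i) * ((μ i).choose (k i) : ℝ))) *
                ∏ i, ((k i : ℝ) * z i) ^ p.2 i) *
                ((Nat.multinomial univ p.2 : ℝ) * ((d:ℝ) * x j) ^ (d - p.1) *
                  (d.choose p.1 : ℝ)) := by ring
          _ = _ := by rw [hsplit]; ring
      rw [Finset.sum_congr rfl step, ← Finset.mul_sum,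
        ← Finset.prod_univ_sum (fun i => range (μ i + 1))
          (fun i t => (-1:ℝ) ^ (μ i - t) * ((μ i).choose t : ℝ) * (t : ℝ) ^ p.2 i)]
      have hA : (∏ i, ∑ t ∈ range (μ i + 1),
          (-1:ℝ) ^ (μ i - t) * ((μ i).choose t : ℝ) * (t : ℝ) ^ p.2 i)
          = ∏ i, Adiff (μ i) (p.2 i) := rfl
      rw [hA, mul_pow]
      ring

/-- admissible tuples -/
def TT (n d : ℕ) (α : Fin n → ℕ) : Finset (Fin n → ℕ) :=
  (Finset.Nat.antidiagonalTuple n d).filter fun γ => ∀ i, α i = 0 → γ i = 0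

noncomputable def FFn (n d : ℕ) (γ : Fin n → ℕ) : (Fin n → ℝ) → ℝ :=
  fun x => (∑ i, (γ i : ℝ) * x i) ^ d

lemma H_mem (n d : ℕ) (hd : 0 < d) (α : Fin n → ℕ) (hαd : ∑ i, α i = d) (j : Fin n)
    (hj : α j ≠ 0) :
    ∀ t : ℕ, ∀ μ : Fin n → ℕ, μ j = 0 → (∀ i, α i = 0 → μ i = 0) → (∑ i, μ i) ≤ d →
      d - ∑ i, μ i = t →
      (fun x : Fin n → ℝ => x j ^ (d - ∑ i, μ i) * ∏ i, (x i - x j) ^ μ i)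
        ∈ Submodule.span ℝ (FFn n d '' ↑(TT n d α)) := by
  intro t
  induction t using Nat.strong_induction_on with
  | _ t IH =>
  intro μ hμj hμsupp hμd hμt
  set V := Submodule.span ℝ (FFn n d '' ↑(TT n d α)) with hV
  -- the left-hand side of EQkey, as a function, lies in V
  have hLfun : (fun x : Fin n → ℝ => ∑ k ∈ piFinset (fun i => range (μ i + 1)),
      (∏ i, ((-1:ℝ) ^ (μ i - k i) * ((μ i).choose (k i) : ℝ))) *
        (∑ i, ((if i = j then d - ∑ i', k i' else k i : ℕ) : ℝ) * x i) ^ d) ∈ V := by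
    have heq : (fun x : Fin n → ℝ => ∑ k ∈ piFinset (fun i => range (μ i + 1)),
        (∏ i, ((-1:ℝ) ^ (μ i - k i) * ((μ i).choose (k i) : ℝ))) *
          (∑ i, ((if i = j then d - ∑ i', k i' else k i : ℕ) : ℝ) * x i) ^ d)
        = ∑ k ∈ piFinset (fun i => range (μ i + 1)),
            (∏ i, ((-1:ℝ) ^ (μ i - k i) * ((μ i).choose (k i) : ℝ))) •
              FFn n d (fun i => if i = j then d - ∑ i', k i' else k i) := by
      funext x
      rw [Finset.sum_apply]
      exact Finset.sum_congr rfl fun k _ => rfl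
    rw [heq]
    apply Submodule.sum_mem
    intro k hk
    apply Submodule.smul_mem
    apply Submodule.subset_span
    refine ⟨_, ?_, rfl⟩
    have hkmem := mem_piFinset.mp hk
    have hkj : k j = 0 := by
      have := hkmem j
      rw [hμj] at this
      simpa using this
    have hki : ∀ i, k i ≤ μ i := fun i => Nat.lt_succ_iff.mp (mem_range.mp (hkmem i))
    have hkle : (∑ i, k i) ≤ d := le_trans (Finset.sum_le_sum fun i _ => hki i) hμd
    simp only [TT, Finset.coe_filter, Set.mem_setOf_eq, Finset.mem_coe]
    constructor
    · rw [Finset.Nat.mem_antidiagonalTuple]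
      rw [← Finset.add_sum_erase _ _ (mem_univ j), if_pos rfl]
      have h1 : ∑ i ∈ univ.erase j, (if i = j then d - ∑ i', k i' else k i)
          = ∑ i ∈ univ.erase j, k i :=
        Finset.sum_congr rfl fun i hi => if_neg (Finset.ne_of_mem_erase hi)
      have h2 : ∑ i ∈ univ.erase j, k i = ∑ i, k i :=
        Finset.sum_erase _ hkj
      rw [h1, h2]
      omega
    · intro i hi
      by_cases h : i = j
      · exact absurd (h ▸ hi) hj
      · rw [if_neg h]
        have := hμsupp i hi
        have := hki i
        omega
  -- rewrite via EQkey
  set Sfin := (range (d+1)).sigma (fun r => piAntidiag (univ : Finset (Fin n)) r) with hSfin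
  set G : (Σ _ : ℕ, (Fin n → ℕ)) → (Fin n → ℝ) → ℝ :=
    fun p => fun x => x j ^ (d - p.1) * ∏ i, (x i - x j) ^ p.2 i with hG
  set cp : (Σ _ : ℕ, (Fin n → ℕ)) → ℝ :=
    fun p => (d.choose p.1 : ℝ) * (Nat.multinomial univ p.2 : ℝ) * (∏ i, Adiff (μ i) (p.2 i))
      * (d:ℝ) ^ (d - p.1) with hcp
  have heq2 : (fun x : Fin n → ℝ => ∑ k ∈ piFinset (fun i => range (μ i + 1)),
      (∏ i, ((-1:ℝ) ^ (μ i - k i) * ((μ i).choose (k i) : ℝ))) *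
        (∑ i, ((if i = j then d - ∑ i', k i' else k i : ℕ) : ℝ) * x i) ^ d)
      = ∑ p ∈ Sfin, cp p • G p := by
    funext x
    rw [EQkey n d j μ hμj hμd x, Finset.sum_apply]
    rfl
  rw [heq2] at hLfun
  set p0 : (Σ _ : ℕ, (Fin n → ℕ)) := ⟨∑ i, μ i, μ⟩ with hp0def
  have hp0 : p0 ∈ Sfin := by
    rw [hSfin, Finset.mem_sigma]
    refine ⟨mem_range.mpr (by simp only [hp0def]; omega), ?_⟩
    rw [Finset.mem_piAntidiag]
    exact ⟨rfl, fun i _ => mem_univ i⟩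
  have hrest : ∀ p ∈ Sfin.erase p0, cp p • G p ∈ V := by
    intro p hp
    obtain ⟨hpne, hpmem⟩ := Finset.mem_erase.mp hp
    rw [Finset.mem_sigma] at hpmem
    obtain ⟨hp1, hp2⟩ := hpmem
    rw [mem_range] at hp1
    rw [Finset.mem_piAntidiag] at hp2
    obtain ⟨hp2sum, -⟩ := hp2
    have hp2sum' : ∑ i, p.2 i = p.1 := hp2sum
    by_cases hA : (∏ i, Adiff (μ i) (p.2 i)) = 0
    · have : cp p = 0 := by rw [hcp]; simp [hA]
      rw [this, zero_smul]
      exact Submodule.zero_mem V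
    · have hAi : ∀ i, Adiff (μ i) (p.2 i) ≠ 0 := by
        intro i
        exact Finset.prod_ne_zero_iff.mp hA i (mem_univ i)
      have hge : ∀ i, μ i ≤ p.2 i := fun i => Adiff_ne_zero_ge (hAi i)
      have hp2j : p.2 j = 0 := by
        by_contra hc
        exact hAi j (by rw [hμj]; exact Adiff_zero_pos (Nat.pos_of_ne_zero hc))
      have hp2supp : ∀ i, α i = 0 → p.2 i = 0 := by
        intro i hi
        by_contra hc
        exact hAi i (by rw [hμsupp i hi]; exact Adiff_zero_pos (Nat.pos_of_ne_zero hc))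
      have hp2ne : p.2 ≠ μ := by
        intro hc
        apply hpne
        have : p.1 = ∑ i, μ i := by rw [← hp2sum, hc]
        rw [hp0def]
        cases p with
        | mk a b =>
          simp only at hc this
          subst hc
          subst this
          rfl
      have hlt : (∑ i, μ i) < ∑ i, p.2 i := by
        apply Finset.sum_lt_sum (fun i _ => hge i)
        by_contra hc
        push_neg at hc
        apply hp2ne
        funext i
        have := hc i (mem_univ i)
        have := hge i
        omega
      apply Submodule.smul_mem
      have hGp : G p = fun x : Fin n → ℝ => x j ^ (d - ∑ i, p.2 i) * ∏ i, (x i - x j) ^ p.2 i := by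
        funext x
        show x j ^ (d - p.1) * ∏ i, (x i - x j) ^ p.2 i = _
        rw [hp2sum']
      rw [hGp]
      apply IH (d - ∑ i, p.2 i)
      · omega
      · exact hp2j
      · exact hp2supp
      · omega
      · rfl
  -- split off the p0 term
  have hsplit : cp p0 • G p0 = (∑ p ∈ Sfin, cp p • G p) - ∑ p ∈ Sfin.erase p0, cp p • G p := by
    rw [← Finset.add_sum_erase _ _ hp0]
    abel
  have hmem0 : cp p0 • G p0 ∈ V := by
    rw [hsplit]
    exact Submodule.sub_mem V hLfun (Submodule.sum_mem V hrest)
  have hc0 : cp p0 ≠ 0 := by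
    rw [hcp, hp0def]
    have h1 : (0:ℝ) < (d.choose (∑ i, μ i) : ℝ) := by
      exact_mod_cast Nat.choose_pos hμd
    have h2 : (0:ℝ) < (Nat.multinomial univ μ : ℝ) := by
      exact_mod_cast Nat.multinomial_pos _ _
    have h3 : (0:ℝ) < ∏ i, Adiff (μ i) (μ i) := by
      apply Finset.prod_pos
      intro i _
      rw [Adiff_self]
      exact_mod_cast Nat.factorial_pos (μ i)
    have h4 : (0:ℝ) < (d:ℝ) ^ (d - ∑ i, μ i) := by
      apply pow_pos
      exact_mod_cast hd
    positivity
  have := (Submodule.smul_mem_iff V hc0).mp hmem0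
  rw [hG] at this
  exact this


theorem stmt8 (n d : ℕ) (hn : 0 < n) (hd : 0 < d) (α : Fin n → ℕ)
    (hα : α ∈ Finset.Nat.antidiagonalTuple n d) :
    ∃ c : (Fin n → ℕ) → ℝ,
      (∀ γ ∈ Finset.Nat.antidiagonalTuple n d,
        (∃ k, α k = 0 ∧ γ k ≠ 0) → c γ = 0) ∧
      ∀ x : Fin n → ℝ,
        ∏ i, x i ^ α i
          = ∑ γ ∈ Finset.Nat.antidiagonalTuple n d, c γ * (∑ i, (γ i : ℝ) * x i) ^ d := by
  have hαsum : ∑ i, α i = d := Finset.Nat.mem_antidiagonalTuple.mp hα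
  obtain ⟨j, hj⟩ : ∃ j, α j ≠ 0 := by
    by_contra hc
    push_neg at hc
    have : ∑ i, α i = 0 := Finset.sum_eq_zero fun i _ => hc i
    omega
  set α' : Fin n → ℕ := fun i => if i = j then 0 else α i with hα'
  have hα'j : α' j = 0 := by simp [hα']
  have hα'le : ∀ i, α' i ≤ α i := by
    intro i
    by_cases h : i = j <;> simp [hα', h]
  have e1 : ∑ i, α' i = ∑ i ∈ univ.erase j, α i := by
    rw [← Finset.sum_erase univ hα'j]
    exact Finset.sum_congr rfl fun i hi => if_neg (Finset.ne_of_mem_erase hi)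
  have e2 : α j + ∑ i ∈ univ.erase j, α i = d := by
    rw [Finset.add_sum_erase _ α (mem_univ j), hαsum]
  have hα'sum : (∑ i, α' i) + α j = d := by omega
  have hmon : (fun x : Fin n → ℝ => ∏ i, x i ^ α i)
      = ∑ μ ∈ piFinset (fun i => range (α' i + 1)),
          (∏ i, ((α' i).choose (μ i) : ℝ)) •
            (fun x : Fin n → ℝ => x j ^ (d - ∑ i, μ i) * ∏ i, (x i - x j) ^ μ i) := by
    funext x
    rw [Finset.sum_apply]
    have s1 : ∏ i, x i ^ α i = x j ^ α j * ∏ i, ((x i - x j) + x j) ^ α' i := by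
      have hxx : ∀ i, ((x i - x j) + x j) = x i := fun i => by ring
      simp_rw [hxx]
      rw [← Finset.mul_prod_erase univ (fun i => x i ^ α i) (mem_univ j)]
      congr 1
      calc ∏ i ∈ univ.erase j, x i ^ α i
          = ∏ i ∈ univ.erase j, x i ^ α' i :=
            Finset.prod_congr rfl fun i hi => by
              rw [show α' i = α i from if_neg (Finset.ne_of_mem_erase hi)]
        _ = ∏ i, x i ^ α' i := Finset.prod_erase univ (by rw [hα'j, pow_zero])
    rw [s1]
    have s2 : ∏ i, ((x i - x j) + x j) ^ α' i
        = ∑ μ ∈ piFinset (fun i => range (α' i + 1)),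
            ∏ i, ((x i - x j) ^ μ i * x j ^ (α' i - μ i) * ((α' i).choose (μ i) : ℝ)) := by
      have hpu := Finset.prod_univ_sum (fun i => range (α' i + 1))
        (fun i t => (x i - x j) ^ t * x j ^ (α' i - t) * ((α' i).choose t : ℝ))
      rw [← hpu]
      exact Finset.prod_congr rfl fun i _ => add_pow _ _ _
    rw [s2, Finset.mul_sum]
    apply Finset.sum_congr rfl
    intro μ hμ
    have hμle : ∀ i, μ i ≤ α' i := fun i =>
      Nat.lt_succ_iff.mp (mem_range.mp (mem_piFinset.mp hμ i))
    have hμsum : ∑ i, μ i ≤ ∑ i, α' i := Finset.sum_le_sum fun i _ => hμle i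
    rw [Finset.prod_mul_distrib, Finset.prod_mul_distrib, Finset.prod_pow_eq_pow_sum]
    have hexp : ∑ i ∈ univ, (α' i - μ i) = (∑ i, α' i) - ∑ i, μ i :=
      Finset.sum_tsub_distrib univ fun i _ => hμle i
    rw [hexp]
    have hxj : x j ^ α j * x j ^ ((∑ i, α' i) - ∑ i, μ i) = x j ^ (d - ∑ i, μ i) := by
      rw [← pow_add]
      congr 1
      omega
    simp only [Pi.smul_apply, smul_eq_mul]
    rw [← hxj]
    ring
  have hmem : (fun x : Fin n → ℝ => ∏ i, x i ^ α i)
      ∈ Submodule.span ℝ (FFn n d '' ↑(TT n d α)) := by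
    rw [hmon]
    apply Submodule.sum_mem
    intro μ hμ
    apply Submodule.smul_mem
    have hμle : ∀ i, μ i ≤ α' i := fun i =>
      Nat.lt_succ_iff.mp (mem_range.mp (mem_piFinset.mp hμ i))
    have hμsum : ∑ i, μ i ≤ ∑ i, α' i := Finset.sum_le_sum fun i _ => hμle i
    apply H_mem n d hd α hαsum j hj (d - ∑ i, μ i) μ
    · have := hμle j
      omega
    · intro i hi
      have h1 := hμle i
      have h2 : α' i = 0 := by
        by_cases h : i = j <;> simp [hα', h, hi]
      omega
    · omega
    · rfl
  obtain ⟨l, hl, hlc⟩ := (Finsupp.mem_span_image_iff_linearCombination ℝ).mp hmem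
  refine ⟨fun γ => l γ, ?_, ?_⟩
  · intro γ hγ hex
    apply (Finsupp.mem_supported' ℝ l).mp hl γ
    intro hc
    rw [Finset.mem_coe, TT, Finset.mem_filter] at hc
    obtain ⟨k, hk1, hk2⟩ := hex
    exact hk2 (hc.2 k hk1)
  · intro x
    have hsupp : l.support ⊆ Finset.Nat.antidiagonalTuple n d := by
      intro γ hγ
      have := (Finsupp.mem_supported ℝ l).mp hl hγ
      rw [Finset.mem_coe, TT, Finset.mem_filter] at this
      exact this.1
    have heval : (fun x : Fin n → ℝ => ∏ i, x i ^ α i)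
        = ∑ γ ∈ Finset.Nat.antidiagonalTuple n d, l γ • FFn n d γ := by
      rw [← hlc, Finsupp.linearCombination_apply, Finsupp.sum]
      exact Finset.sum_subset hsupp fun γ _ hγ => by
        rw [Finsupp.notMem_support_iff.mp hγ, zero_smul]
    have hx := congrFun heval x
    simp only [Finset.sum_apply, Pi.smul_apply, smul_eq_mul] at hx
    exact hx
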